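/- For the normalization map g(x) = x/‖x‖ on ℝⁿ\{0}, at every point x ≠ 0 and for every ε with J_g(x)ε ≠ 0 we have min over λ of ‖[εᵀH_{gᵢ}(x)ε]_{i=1}^n − λ J_g(x)ε‖ / ‖J_g(x)ε‖² ≤ 1. -/

import Mathlib

open RealInnerProductSpace

noncomputable section

variable {n : ℕ}

private lemma aux_norm (x : EuclideanSpace ℝ (Fin n)) (hx : x ≠ 0) :
    HasFDerivAt (fun y : EuclideanSpace ℝ (Fin n) => ‖y‖) (‖x‖⁻¹ • innerSL ℝ x) x := by
  have h1 : HasFDerivAt (fun y : EuclideanSpace ℝ (Fin n) => ⟪y, y⟫) ((2:ℝ) • innerSL ℝ x) x := by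
    have := (hasFDerivAt_id x).inner ℝ (hasFDerivAt_id x)
    refine this.congr_fderiv ?_
    symm
    ext v
    simp only [ContinuousLinearMap.smul_apply, innerSL_apply_apply, fderivInnerCLM_apply,
      ContinuousLinearMap.comp_apply, ContinuousLinearMap.prod_apply,
      ContinuousLinearMap.id_apply, id_eq]
    rw [real_inner_comm v x, two_smul]
  have hxx : ⟪x, x⟫ ≠ 0 := by
    rw [real_inner_self_eq_norm_sq]
    exact pow_ne_zero 2 (norm_ne_zero_iff.2 hx)
  have h2 := HasDerivAt.comp_hasFDerivAt (f := fun y : EuclideanSpace ℝ (Fin n) => ⟪y, y⟫) x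
    (Real.hasDerivAt_sqrt hxx) h1
  have hfun : (Real.sqrt ∘ fun y : EuclideanSpace ℝ (Fin n) => ⟪y, y⟫)
      = fun y : EuclideanSpace ℝ (Fin n) => ‖y‖ := by
    funext y
    simp only [Function.comp_apply, real_inner_self_eq_norm_sq]
    exact Real.sqrt_sq (norm_nonneg y)
  have hsq : Real.sqrt ⟪x, x⟫ = ‖x‖ := by
    rw [real_inner_self_eq_norm_sq]; exact Real.sqrt_sq (norm_nonneg x)
  rw [hfun] at h2
  refine h2.congr_fderiv ?_
  symm
  rw [hsq, smul_smul]
  congr 1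
  have : ‖x‖ ≠ 0 := norm_ne_zero_iff.2 hx
  field_simp

private lemma aux_ninv (x : EuclideanSpace ℝ (Fin n)) (hx : x ≠ 0) :
    HasFDerivAt (fun y : EuclideanSpace ℝ (Fin n) => ‖y‖⁻¹)
      ((-(‖x‖ ^ 2)⁻¹) • (‖x‖⁻¹ • innerSL ℝ x)) x :=
  HasDerivAt.comp_hasFDerivAt (f := fun y : EuclideanSpace ℝ (Fin n) => ‖y‖) x
    (hasDerivAt_inv (norm_ne_zero_iff.2 hx)) (aux_norm x hx)

private lemma aux_g (x : EuclideanSpace ℝ (Fin n)) (hx : x ≠ 0) :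
    HasFDerivAt (fun z : EuclideanSpace ℝ (Fin n) => ‖z‖⁻¹ • z)
      (‖x‖⁻¹ • ContinuousLinearMap.id ℝ _ +
        ((-(‖x‖ ^ 2)⁻¹) • (‖x‖⁻¹ • innerSL ℝ x)).smulRight x) x :=
  (aux_ninv x hx).smul (hasFDerivAt_id x)

private lemma aux_g_apply (x : EuclideanSpace ℝ (Fin n)) (hx : x ≠ 0)
    (v : EuclideanSpace ℝ (Fin n)) :
    fderiv ℝ (fun z : EuclideanSpace ℝ (Fin n) => ‖z‖⁻¹ • z) x v
      = ‖x‖⁻¹ • v + (-(‖x‖ ^ 3)⁻¹ * ⟪x, v⟫) • x := by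
  rw [(aux_g x hx).fderiv]
  have hr : ‖x‖ ≠ 0 := norm_ne_zero_iff.2 hx
  simp only [ContinuousLinearMap.add_apply, ContinuousLinearMap.smul_apply,
    ContinuousLinearMap.id_apply, ContinuousLinearMap.smulRight_apply, innerSL_apply_apply,
    smul_smul]
  congr 2
  generalize ⟪x, v⟫ = c
  field_simp
  ring_nf
  field_simp

set_option maxHeartbeats 1000000 in
/-- For the normalization map `g(x) = x/‖x‖` on `ℝⁿ\{0}`, at every `x ≠ 0` and every `ε` with
`J_g(x)ε ≠ 0`, `min_λ ‖[εᵀH_{gᵢ}(x)ε]ᵢ − λ J_g(x)ε‖ / ‖J_g(x)ε‖² ≤ 1`. -/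
theorem curvature_bound_normalization_le_one {n : ℕ}
    (g : EuclideanSpace ℝ (Fin n) → EuclideanSpace ℝ (Fin n))
    (hg : ∀ x, g x = ‖x‖⁻¹ • x)
    (x ε : EuclideanSpace ℝ (Fin n)) (hx : x ≠ 0)
    (hε : fderiv ℝ g x ε ≠ 0)
    (h2 : EuclideanSpace ℝ (Fin n))
    (hh2 : ∀ i, h2 i = fderiv ℝ (fun y => fderiv ℝ (fun z => g z i) y ε) x ε) :
    ∃ lam : ℝ, ‖h2 - lam • fderiv ℝ g x ε‖ / ‖fderiv ℝ g x ε‖ ^ 2 ≤ 1 := by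
  have gdef : g = fun z : EuclideanSpace ℝ (Fin n) => ‖z‖⁻¹ • z := funext hg
  set r : ℝ := ‖x‖ with hrdef
  have hr : r ≠ 0 := norm_ne_zero_iff.2 hx
  set a : ℝ := ⟪x, ε⟫ with hadef
  set b : ℝ := ⟪ε, ε⟫ with hbdef
  -- the Jacobian applied to ε
  have hJ : fderiv ℝ g x ε = r⁻¹ • ε + (-(r ^ 3)⁻¹ * a) • x := by
    rw [gdef]; exact aux_g_apply x hx ε
  -- eventual formula for the first derivative coordinatewise
  have key : ∀ i : Fin n, (fun y : EuclideanSpace ℝ (Fin n) => fderiv ℝ (fun z => g z i) y ε)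
      =ᶠ[nhds x] (fun y : EuclideanSpace ℝ (Fin n) => ‖y‖⁻¹ * ε i + (-(‖y‖ ^ 3)⁻¹ * ⟪y, ε⟫) * y i) := by
    intro i
    filter_upwards [isOpen_compl_singleton.mem_nhds hx] with y hy
    have hy' : y ≠ 0 := hy
    have hcomp : (fun z : EuclideanSpace ℝ (Fin n) => g z i) = fun z : EuclideanSpace ℝ (Fin n) => EuclideanSpace.proj (𝕜 := ℝ) i (g z) := by
      funext z; simp
    have hgy : HasFDerivAt g
        (‖y‖⁻¹ • ContinuousLinearMap.id ℝ _ +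
          ((-(‖y‖ ^ 2)⁻¹) • (‖y‖⁻¹ • innerSL ℝ y)).smulRight y) y := by
      rw [gdef]; exact aux_g y hy'
    have hfd : fderiv ℝ (fun z : EuclideanSpace ℝ (Fin n) => g z i) y =
        (EuclideanSpace.proj (𝕜 := ℝ) i).comp (fderiv ℝ g y) := by
      rw [hcomp]
      exact ((EuclideanSpace.proj (𝕜 := ℝ) i).hasFDerivAt.comp y hgy.differentiableAt.hasFDerivAt).fderiv
    rw [hfd]
    simp only [ContinuousLinearMap.comp_apply, PiLp.proj_apply]
    have := aux_g_apply y hy' ε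
    rw [gdef.symm] at this
    rw [show fderiv ℝ g y ε = ‖y‖⁻¹ • ε + (-(‖y‖ ^ 3)⁻¹ * ⟪y, ε⟫) • y by
      rw [gdef]; exact aux_g_apply y hy' ε]
    simp [smul_eq_mul]
  -- compute h2 componentwise
  have hcomp2 : ∀ i : Fin n,
      h2 i = (3 * a ^ 2 * (r ^ 5)⁻¹ - b * (r ^ 3)⁻¹) * x i + (-(2 * a * (r ^ 3)⁻¹)) * ε i := by
    intro i
    rw [hh2 i, (key i).fderiv_eq]
    -- build the derivative of the explicit function
    have hA : HasFDerivAt (fun y : EuclideanSpace ℝ (Fin n) => ‖y‖⁻¹ * ε i)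
        ((ε i) • ((-(r ^ 2)⁻¹) • (r⁻¹ • innerSL ℝ x))) x := (aux_ninv x hx).mul_const (ε i)
    have hn3' : HasDerivAt (fun t : ℝ => (t ^ 3)⁻¹) (-(3 * r ^ 2) / (r ^ 3) ^ 2) r :=
      (hasDerivAt_pow 3 r).inv (pow_ne_zero 3 hr)
    have hn3 : HasFDerivAt (fun y : EuclideanSpace ℝ (Fin n) => (‖y‖ ^ 3)⁻¹)
        ((-(3 * r ^ 2) / (r ^ 3) ^ 2) • (r⁻¹ • innerSL ℝ x)) x :=
      HasDerivAt.comp_hasFDerivAt (f := fun y : EuclideanSpace ℝ (Fin n) => ‖y‖) x hn3' (aux_norm x hx)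
    have hI : HasFDerivAt (fun y : EuclideanSpace ℝ (Fin n) => ⟪y, ε⟫)
        ((fderivInnerCLM ℝ (x, ε)).comp
          ((ContinuousLinearMap.id ℝ _).prod (0 : EuclideanSpace ℝ (Fin n) →L[ℝ] EuclideanSpace ℝ (Fin n)))) x := by
      have := (hasFDerivAt_id x).inner ℝ (hasFDerivAt_const ε x)
      simpa using this
    have hP : HasFDerivAt (fun y : EuclideanSpace ℝ (Fin n) => y i) (EuclideanSpace.proj (𝕜 := ℝ) i) x :=
      (EuclideanSpace.proj (𝕜 := ℝ) i).hasFDerivAt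
    have htot := hA.add ((hn3.neg.mul hI).mul hP)
    rw [(show HasFDerivAt (fun y : EuclideanSpace ℝ (Fin n) => ‖y‖⁻¹ * ε i + -(‖y‖ ^ 3)⁻¹ * ⟪y, ε⟫ * y i) _ x from htot).fderiv]
    simp only [ContinuousLinearMap.add_apply, ContinuousLinearMap.smul_apply,
      ContinuousLinearMap.comp_apply, ContinuousLinearMap.prod_apply,
      ContinuousLinearMap.id_apply, ContinuousLinearMap.zero_apply,
      ContinuousLinearMap.neg_apply, innerSL_apply_apply, fderivInnerCLM_apply,
      PiLp.proj_apply, smul_eq_mul, inner_zero_right, Pi.mul_apply, Pi.neg_apply]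
    rw [← hadef, ← hbdef, ← hrdef]
    field_simp
    ring
  -- assemble the vector form of h2
  have hw : h2 = (3 * a ^ 2 * (r ^ 5)⁻¹ - b * (r ^ 3)⁻¹) • x + (-(2 * a * (r ^ 3)⁻¹)) • ε := by
    ext i
    simp only [PiLp.add_apply, PiLp.smul_apply, smul_eq_mul, hcomp2 i]
  have hJi : ∀ i, fderiv ℝ g x ε i = r⁻¹ * ε i + (-(r ^ 3)⁻¹ * a) * x i := by
    intro i
    rw [hJ]
    simp only [PiLp.add_apply, PiLp.smul_apply, smul_eq_mul]
  refine ⟨-(2 * a * (r ^ 2)⁻¹), ?_⟩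
  have hvec : h2 - (-(2 * a * (r ^ 2)⁻¹)) • fderiv ℝ g x ε
      = (a ^ 2 * (r ^ 5)⁻¹ - b * (r ^ 3)⁻¹) • x := by
    ext i
    simp only [PiLp.sub_apply, PiLp.smul_apply, smul_eq_mul, hw, hJi i,
      PiLp.add_apply]
    field_simp
    ring
  have hra : ⟪ε, x⟫ = a := (real_inner_comm ε x).symm
  have hJnormsq : ‖fderiv ℝ g x ε‖ ^ 2 = b * (r ^ 2)⁻¹ - a ^ 2 * (r ^ 4)⁻¹ := by
    rw [← real_inner_self_eq_norm_sq, hJ, real_inner_add_add_self]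
    rw [real_inner_smul_left, real_inner_smul_right, real_inner_smul_left,
      real_inner_smul_right, real_inner_smul_left, real_inner_smul_right]
    rw [← hbdef, hra, real_inner_self_eq_norm_sq, ← hrdef]
    field_simp
    ring
  have hr0 : (0:ℝ) < r := norm_pos_iff.2 hx
  have hCS : a ^ 2 ≤ r ^ 2 * b := by
    have := real_inner_mul_inner_self_le x ε
    rw [← hadef, ← hbdef, real_inner_self_eq_norm_sq, ← hrdef] at this
    nlinarith
  have hcfac : a ^ 2 * (r ^ 5)⁻¹ - b * (r ^ 3)⁻¹ = (a ^ 2 - r ^ 2 * b) * (r ^ 5)⁻¹ := by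
    field_simp
  have hnonpos : a ^ 2 * (r ^ 5)⁻¹ - b * (r ^ 3)⁻¹ ≤ 0 := by
    rw [hcfac]
    have h1 : a ^ 2 - r ^ 2 * b ≤ 0 := by linarith
    have h2' : (0:ℝ) ≤ (r ^ 5)⁻¹ := by positivity
    exact mul_nonpos_of_nonpos_of_nonneg h1 h2'
  have hnum : ‖h2 - (-(2 * a * (r ^ 2)⁻¹)) • fderiv ℝ g x ε‖
      = ‖fderiv ℝ g x ε‖ ^ 2 := by
    rw [hvec, norm_smul, Real.norm_eq_abs, ← hrdef, hJnormsq, abs_of_nonpos hnonpos]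
    field_simp
    ring
  have hJpos : (0:ℝ) < ‖fderiv ℝ g x ε‖ := norm_pos_iff.2 hε
  rw [hnum, div_self (pow_ne_zero 2 (ne_of_gt hJpos))]
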